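/- Let X be a vector lattice with X~ separating points of X. Then the canonical image of X is a regular sublattice of X~~ if and only if every order bounded functional on X is order continuous (X~_n = X~). -/

import Mathlib

set_option linter.unusedSectionVars false
set_option maxHeartbeats 1000000

open Filter Set

section ODual

variable (E : Type*) [AddCommGroup E] [Preorder E] [Module ℝ E]

/-- The order (bounded) dual: linear functionals bounded on order intervals. -/
noncomputable def obDual : Submodule ℝ (E →ₗ[ℝ] ℝ) where
  carrier := {f | ∀ w : E, ∃ M : ℝ, ∀ x : E, -w ≤ x → x ≤ w → |f x| ≤ M}
  zero_mem' := fun w => ⟨0, fun x _ _ => by simp⟩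
  add_mem' := fun {f g} hf hg w => by
    obtain ⟨M, hM⟩ := hf w
    obtain ⟨N, hN⟩ := hg w
    refine ⟨M + N, fun x h1 h2 => ?_⟩
    calc |(f + g) x| = |f x + g x| := by simp
    _ ≤ |f x| + |g x| := abs_add_le _ _
    _ ≤ M + N := add_le_add (hM x h1 h2) (hN x h1 h2)
  smul_mem' := fun c f hf => by
    intro w
    obtain ⟨M, hM⟩ := hf w
    refine ⟨|c| * M, fun x h1 h2 => ?_⟩
    calc |(c • f) x| = |c| * |f x| := by simp [abs_mul]
    _ ≤ |c| * M := mul_le_mul_of_nonneg_left (hM x h1 h2) (abs_nonneg c)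

/-- The pointwise-on-positive-elements (pre)order on a space of functionals. -/
instance instSubPre (Y : Submodule ℝ (E →ₗ[ℝ] ℝ)) : Preorder Y where
  le f g := ∀ x : E, 0 ≤ x → (f : E →ₗ[ℝ] ℝ) x ≤ (g : E →ₗ[ℝ] ℝ) x
  le_refl f x _ := le_rfl
  le_trans f g h h1 h2 x hx := (h1 x hx).trans (h2 x hx)

variable {E}

theorem subPre_le_iff {Y : Submodule ℝ (E →ₗ[ℝ] ℝ)} {f g : Y} :
    f ≤ g ↔ ∀ x : E, 0 ≤ x → (f : E →ₗ[ℝ] ℝ) x ≤ (g : E →ₗ[ℝ] ℝ) x := Iff.rfl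

/-- The same preorder `instSubPre` on the order dual of a space of functionals
(instance search no longer finds it there by itself). -/
noncomputable instance instBidualPre (Y : Submodule ℝ (E →ₗ[ℝ] ℝ)) : Preorder (obDual ↥Y) :=
  instSubPre ↥Y (obDual ↥Y)

/-- Order convergence of a net to a limit (sandwich form: eventually
`l - d ≤ x_α ≤ l + d` for every `d` in a set directed downward to `0`). -/
def OConvTo {ι : Type*} [Preorder ι] (x : ι → E) (l : E) : Prop :=
  ∃ D : Set E, D.Nonempty ∧ DirectedOn (· ≥ ·) D ∧ IsGLB D 0 ∧
    ∀ d ∈ D, ∃ α₀ : ι, ∀ α, α₀ ≤ α → l - d ≤ x α ∧ x α ≤ l + d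

/-- Order continuity of a linear functional: `f(x_α) → 0` whenever `x_α ↓ 0`. -/
def OrdContE (f : E →ₗ[ℝ] ℝ) : Prop :=
  ∀ D : Set E, D.Nonempty → DirectedOn (· ≥ ·) D → IsGLB D 0 →
    ∀ ε : ℝ, 0 < ε → ∃ d ∈ D, ∀ e ∈ D, e ≤ d → |f e| < ε

end ODual

section VL

variable (X : Type*) [Lattice X] [AddCommGroup X]
  [CovariantClass X X (· + ·) (· ≤ ·)] [Module ℝ X] [PosSMulMono ℝ X]

variable {X} in
/-- Unbounded order convergence: `|x_α - l| ⊓ u →o 0` for every `u ≥ 0`. -/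
def uoConvTo {ι : Type*} [Preorder ι] (x : ι → X) (l : X) : Prop :=
  ∀ u : X, 0 ≤ u → OConvTo (fun α => |x α - l| ⊓ u) (0 : X)

/-- The canonical evaluation of `x ∈ X` on a space `Y` of functionals on `X`. -/
def hatFun (Y : Submodule ℝ (X →ₗ[ℝ] ℝ)) (x : X) : Y →ₗ[ℝ] ℝ where
  toFun f := (f : X →ₗ[ℝ] ℝ) x
  map_add' f g := by simp
  map_smul' c f := by simp

theorem hatFun_mem (Y : Submodule ℝ (X →ₗ[ℝ] ℝ)) (x : X) :
    hatFun X Y x ∈ obDual Y := by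
  intro w
  refine ⟨(w : X →ₗ[ℝ] ℝ) (x⁺) + (w : X →ₗ[ℝ] ℝ) (x⁻), fun f h1 h2 => ?_⟩
  have hp : (0 : X) ≤ x⁺ := posPart_nonneg x
  have hn : (0 : X) ≤ x⁻ := negPart_nonneg x
  have e1 := (subPre_le_iff.mp h1) _ hp
  have e2 := (subPre_le_iff.mp h2) _ hp
  have e3 := (subPre_le_iff.mp h1) _ hn
  have e4 := (subPre_le_iff.mp h2) _ hn
  have c1 : -((w : X →ₗ[ℝ] ℝ) (x⁺)) ≤ (f : X →ₗ[ℝ] ℝ) (x⁺) := by simpa using e1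
  have c3 : -((w : X →ₗ[ℝ] ℝ) (x⁻)) ≤ (f : X →ₗ[ℝ] ℝ) (x⁻) := by simpa using e3
  have key : (f : X →ₗ[ℝ] ℝ) x
      = (f : X →ₗ[ℝ] ℝ) (x⁺) - (f : X →ₗ[ℝ] ℝ) (x⁻) := by
    rw [← map_sub, posPart_sub_negPart]
  show |(f : X →ₗ[ℝ] ℝ) x| ≤ _
  rw [key]
  have a1 : |(f : X →ₗ[ℝ] ℝ) (x⁺)| ≤ (w : X →ₗ[ℝ] ℝ) (x⁺) := abs_le.mpr ⟨c1, e2⟩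
  have a2 : |(f : X →ₗ[ℝ] ℝ) (x⁻)| ≤ (w : X →ₗ[ℝ] ℝ) (x⁻) := abs_le.mpr ⟨c3, e4⟩
  have := abs_sub ((f : X →ₗ[ℝ] ℝ) (x⁺)) ((f : X →ₗ[ℝ] ℝ) (x⁻))
  linarith

/-- The canonical embedding of `X` into the order dual of `Y ⊆ X~`. -/
def hatEl (Y : Submodule ℝ (X →ₗ[ℝ] ℝ)) (x : X) : obDual Y :=
  ⟨hatFun X Y x, hatFun_mem X Y x⟩

/-- `X~` separates the points of `X`. -/
def SepPoints : Prop := ∀ x : X, x ≠ 0 → ∃ f : obDual X, (f : X →ₗ[ℝ] ℝ) x ≠ 0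

/-- The canonical image of `X` in `X~~` is a regular sublattice:
`x_α ↓ 0` in `X` implies `x̂_α ↓ 0` in `X~~`. -/
def HatRegular : Prop :=
  ∀ D : Set X, D.Nonempty → DirectedOn (· ≥ ·) D → IsGLB D 0 →
    IsGLB (hatEl X (obDual X) '' D) (0 : obDual ↥(obDual X))

variable {X} in
/-- The net `x̂_α` is eventually order bounded in `X~~`. -/
def HatEvOB {ι : Type*} [Preorder ι] (x : ι → X) : Prop :=
  ∃ (b t : obDual ↥(obDual X)) (α₀ : ι), ∀ α, α₀ ≤ α →
    b ≤ hatEl X (obDual X) (x α) ∧ hatEl X (obDual X) (x α) ≤ t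

variable {X} in
/-- Bidual bounded uo-convergence. -/
def bbuoConvTo {ι : Type*} [Preorder ι] (x : ι → X) (l : X) : Prop :=
  uoConvTo x l ∧ HatEvOB x

/-- `X` has the `b`-property: every subset of `X` whose canonical image is
order bounded in `X~~` is order bounded in `X`. -/
def HasBProp : Prop :=
  ∀ A : Set X,
    (∃ b t : obDual ↥(obDual X), ∀ a ∈ A,
        b ≤ hatEl X (obDual X) a ∧ hatEl X (obDual X) a ≤ t) →
    ∃ b t : X, ∀ a ∈ A, b ≤ a ∧ a ≤ t

/-- The Archimedean property for a lattice-ordered group. -/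
def IsArch : Prop := ∀ x y : X, 0 ≤ x → (∀ n : ℕ, n • x ≤ y) → x = 0

end VL


section AuxReal

theorem csSup_mul_left' {c : ℝ} (hc : 0 < c) {s : Set ℝ} (hne : s.Nonempty)
    (hbdd : BddAbove s) : sSup ((c * ·) '' s) = c * sSup s := by
  obtain ⟨M, hM⟩ := hbdd
  have hb2 : BddAbove ((c * ·) '' s) := by
    refine ⟨c * M, ?_⟩
    rintro r ⟨a, ha, rfl⟩
    exact mul_le_mul_of_nonneg_left (hM ha) hc.le
  apply le_antisymm
  · apply csSup_le (hne.image _)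
    rintro r ⟨a, ha, rfl⟩
    exact mul_le_mul_of_nonneg_left (le_csSup ⟨M, hM⟩ ha) hc.le
  · rw [mul_comm, ← le_div_iff₀ hc]
    apply csSup_le hne
    intro a ha
    rw [le_div_iff₀ hc, mul_comm]
    exact le_csSup hb2 ⟨a, ha, rfl⟩

theorem csInf_mul_left' {c : ℝ} (hc : 0 < c) {s : Set ℝ} (hne : s.Nonempty)
    (hbdd : BddBelow s) : sInf ((c * ·) '' s) = c * sInf s := by
  obtain ⟨M, hM⟩ := hbdd
  have hb2 : BddBelow ((c * ·) '' s) := by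
    refine ⟨c * M, ?_⟩
    rintro r ⟨a, ha, rfl⟩
    exact mul_le_mul_of_nonneg_left (hM ha) hc.le
  apply le_antisymm
  · rw [mul_comm, ← div_le_iff₀ hc]
    apply le_csInf hne
    intro a ha
    rw [div_le_iff₀ hc, mul_comm]
    exact csInf_le hb2 ⟨a, ha, rfl⟩
  · apply le_csInf (hne.image _)
    rintro r ⟨a, ha, rfl⟩
    exact mul_le_mul_of_nonneg_left (csInf_le ⟨M, hM⟩ ha) hc.le

end AuxReal

section AuxPos

variable {X : Type*} [Lattice X] [AddCommGroup X]
  [CovariantClass X X (· + ·) (· ≤ ·)] [Module ℝ X] [PosSMulMono ℝ X]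

theorem smul_nonneg'' {c : ℝ} {x : X} (hc : 0 ≤ c) (hx : 0 ≤ x) : 0 ≤ c • x := by
  simpa using smul_le_smul_of_nonneg_left hx hc

variable (f : X →ₗ[ℝ] ℝ)

/-- The positive part value of a functional at a positive vector. -/
noncomputable def pPos (x : X) : ℝ := sSup (f '' {u | 0 ≤ u ∧ u ≤ x})

theorem pSet_nonempty {x : X} (hx : 0 ≤ x) : (f '' {u | 0 ≤ u ∧ u ≤ x}).Nonempty :=
  ⟨f 0, 0, ⟨le_rfl, hx⟩, rfl⟩

theorem pSet_bddAbove (hf : f ∈ obDual X) {x : X} (hx : 0 ≤ x) :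
    BddAbove (f '' {u | 0 ≤ u ∧ u ≤ x}) := by
  obtain ⟨M, hM⟩ := hf x
  refine ⟨M, ?_⟩
  rintro r ⟨u, ⟨h0, h1⟩, rfl⟩
  exact (abs_le.mp (hM u ((neg_nonpos.mpr hx).trans h0) h1)).2

theorem le_pPos (hf : f ∈ obDual X) {x : X} (hx : 0 ≤ x) : f x ≤ pPos f x :=
  le_csSup (pSet_bddAbove f hf hx) ⟨x, ⟨hx, le_rfl⟩, rfl⟩

theorem pPos_nonneg (hf : f ∈ obDual X) {x : X} (hx : 0 ≤ x) : 0 ≤ pPos f x := by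
  have := le_csSup (pSet_bddAbove f hf hx) ⟨0, ⟨le_rfl, hx⟩, rfl⟩
  simp only [map_zero] at this
  exact this

theorem pPos_mono (hf : f ∈ obDual X) {x y : X} (hx : 0 ≤ x) (hxy : x ≤ y) :
    pPos f x ≤ pPos f y := by
  apply csSup_le_csSup (pSet_bddAbove f hf (hx.trans hxy)) (pSet_nonempty f hx)
  rintro r ⟨u, ⟨h0, h1⟩, rfl⟩
  exact ⟨u, ⟨h0, h1.trans hxy⟩, rfl⟩

theorem pPos_zero : pPos f 0 = 0 := by
  have himg : f '' {u | 0 ≤ u ∧ u ≤ (0:X)} = {0} := by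
    ext r
    constructor
    · rintro ⟨u, ⟨h0, h1⟩, rfl⟩
      have : u = 0 := le_antisymm h1 h0
      simp [this]
    · rintro rfl
      exact ⟨0, ⟨le_rfl, le_rfl⟩, map_zero f⟩
  rw [pPos, himg, csSup_singleton]

theorem pPos_add (hf : f ∈ obDual X) {x y : X} (hx : 0 ≤ x) (hy : 0 ≤ y) :
    pPos f (x + y) = pPos f x + pPos f y := by
  have hxy : 0 ≤ x + y := add_nonneg hx hy
  apply le_antisymm
  · apply csSup_le (pSet_nonempty f hxy)
    rintro r ⟨u, ⟨h0, h1⟩, rfl⟩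
    have h2 : 0 ≤ u ⊓ x := le_inf h0 hx
    have h3 : u ⊓ x ≤ x := inf_le_right
    have h4 : 0 ≤ u - u ⊓ x := sub_nonneg.mpr inf_le_left
    have h5 : u - u ⊓ x ≤ y := by
      rw [sub_inf]
      exact sup_le (by simpa using hy) (sub_le_iff_le_add'.mpr h1)
    have hsplit : f u = f (u ⊓ x) + f (u - u ⊓ x) := by
      rw [← map_add]
      congr 1
      abel
    rw [hsplit]
    exact add_le_add (le_csSup (pSet_bddAbove f hf hx) ⟨_, ⟨h2, h3⟩, rfl⟩)
      (le_csSup (pSet_bddAbove f hf hy) ⟨_, ⟨h4, h5⟩, rfl⟩)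
  · have key : ∀ u v : X, 0 ≤ u → u ≤ x → 0 ≤ v → v ≤ y → f u + f v ≤ pPos f (x + y) := by
      intro u v hu1 hu2 hv1 hv2
      rw [← map_add]
      exact le_csSup (pSet_bddAbove f hf hxy)
        ⟨u + v, ⟨add_nonneg hu1 hv1, add_le_add hu2 hv2⟩, rfl⟩
    have h1 : ∀ u : X, 0 ≤ u → u ≤ x → pPos f y ≤ pPos f (x + y) - f u := by
      intro u hu1 hu2
      apply csSup_le (pSet_nonempty f hy)
      rintro r ⟨v, ⟨hv1, hv2⟩, rfl⟩
      linarith [key u v hu1 hu2 hv1 hv2]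
    have h2 : pPos f x ≤ pPos f (x + y) - pPos f y := by
      apply csSup_le (pSet_nonempty f hx)
      rintro r ⟨u, ⟨hu1, hu2⟩, rfl⟩
      linarith [h1 u hu1 hu2]
    linarith

theorem pPos_smul (hf : f ∈ obDual X) {c : ℝ} (hc : 0 < c) {x : X} (hx : 0 ≤ x) :
    pPos f (c • x) = c * pPos f x := by
  have himg : f '' {u | 0 ≤ u ∧ u ≤ c • x} = (c * ·) '' (f '' {u | 0 ≤ u ∧ u ≤ x}) := by
    ext r
    constructor
    · rintro ⟨u, ⟨h0, h1⟩, rfl⟩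
      refine ⟨f (c⁻¹ • u), ⟨c⁻¹ • u, ⟨smul_nonneg'' (inv_nonneg.mpr hc.le) h0, ?_⟩, rfl⟩, ?_⟩
      · have := smul_le_smul_of_nonneg_left h1 (inv_nonneg.mpr hc.le)
        rwa [smul_smul, inv_mul_cancel₀ hc.ne', one_smul] at this
      · show c * f (c⁻¹ • u) = f u
        rw [← smul_eq_mul, ← map_smul, smul_smul, mul_inv_cancel₀ hc.ne', one_smul]
    · rintro ⟨r', ⟨v, ⟨h0, h1⟩, rfl⟩, rfl⟩
      exact ⟨c • v, ⟨smul_nonneg'' hc.le h0, smul_le_smul_of_nonneg_left h1 hc.le⟩,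
        by rw [map_smul, smul_eq_mul]⟩
  rw [pPos, himg, csSup_mul_left' hc (pSet_nonempty f hx) (pSet_bddAbove f hf hx)]
  rfl

theorem pPos_sub_eq (hf : f ∈ obDual X) {a b c d : X} (ha : 0 ≤ a) (hb : 0 ≤ b) (hc : 0 ≤ c)
    (hd : 0 ≤ d) (h : a - b = c - d) : pPos f a - pPos f b = pPos f c - pPos f d := by
  have h' : a + d = c + b := sub_eq_sub_iff_add_eq_add.mp h
  have e1 := pPos_add f hf ha hd
  have e2 := pPos_add f hf hc hb
  rw [h'] at e1
  linarith

theorem pPos_posPart_smul (hf : f ∈ obDual X) {c : ℝ} (hc : 0 < c) (x : X) :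
    pPos f (c • x)⁺ - pPos f (c • x)⁻ = c * (pPos f x⁺ - pPos f x⁻) := by
  have h1 : (c • x)⁺ - (c • x)⁻ = c • x⁺ - c • x⁻ := by
    rw [posPart_sub_negPart, ← smul_sub, posPart_sub_negPart]
  have h2 := pPos_sub_eq f hf (posPart_nonneg _) (negPart_nonneg _)
    (smul_nonneg'' hc.le (posPart_nonneg x)) (smul_nonneg'' hc.le (negPart_nonneg x)) h1
  rw [pPos_smul f hf hc (posPart_nonneg x), pPos_smul f hf hc (negPart_nonneg x)] at h2
  rw [h2]; ring

/-- The positive part of an order bounded functional, as a linear map. -/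
noncomputable def posLM (hf : f ∈ obDual X) : X →ₗ[ℝ] ℝ where
  toFun x := pPos f x⁺ - pPos f x⁻
  map_add' x y := by
    have h1 : (x + y)⁺ - (x + y)⁻ = x⁺ + y⁺ - (x⁻ + y⁻) := by
      rw [posPart_sub_negPart,
        show x⁺ + y⁺ - (x⁻ + y⁻) = (x⁺ - x⁻) + (y⁺ - y⁻) from by abel,
        posPart_sub_negPart, posPart_sub_negPart]
    have h2 := pPos_sub_eq f hf (posPart_nonneg _) (negPart_nonneg _)
      (add_nonneg (posPart_nonneg x) (posPart_nonneg y))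
      (add_nonneg (negPart_nonneg x) (negPart_nonneg y)) h1
    rw [pPos_add f hf (posPart_nonneg x) (posPart_nonneg y),
      pPos_add f hf (negPart_nonneg x) (negPart_nonneg y)] at h2
    show pPos f (x + y)⁺ - pPos f (x + y)⁻ = (pPos f x⁺ - pPos f x⁻) + (pPos f y⁺ - pPos f y⁻)
    linarith
  map_smul' c x := by
    simp only [RingHom.id_apply, smul_eq_mul]
    rcases lt_trichotomy c 0 with hneg | rfl | hpos
    · have hkey := pPos_posPart_smul f hf (neg_pos.mpr hneg) (-x)
      rw [show (-c) • (-x) = c • x from by rw [smul_neg, neg_smul, neg_neg],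
        posPart_neg, negPart_neg] at hkey
      rw [hkey]; ring
    · rw [zero_smul]
      simp [posPart_zero, negPart_zero, pPos_zero]
    · exact pPos_posPart_smul f hf hpos x

theorem posLM_apply (hf : f ∈ obDual X) (x : X) :
    posLM f hf x = pPos f x⁺ - pPos f x⁻ := rfl

theorem posLM_nonneg (hf : f ∈ obDual X) {x : X} (hx : 0 ≤ x) : 0 ≤ posLM f hf x := by
  rw [posLM_apply, posPart_eq_self.mpr hx, negPart_eq_zero.mpr hx, pPos_zero, sub_zero]
  exact pPos_nonneg f hf hx

theorem le_posLM (hf : f ∈ obDual X) {x : X} (hx : 0 ≤ x) : f x ≤ posLM f hf x := by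
  rw [posLM_apply, posPart_eq_self.mpr hx, negPart_eq_zero.mpr hx, pPos_zero, sub_zero]
  exact le_pPos f hf hx

theorem posLM_mem (hf : f ∈ obDual X) : posLM f hf ∈ obDual X := by
  intro w
  refine ⟨2 * pPos f w⁺, fun x h1 h2 => ?_⟩
  have hxp : x⁺ ≤ w⁺ := posPart_mono h2
  have hxn : x⁻ ≤ w⁺ := by
    rw [← posPart_neg]
    exact posPart_mono (by rwa [neg_le] at h1)
  have b1 : pPos f x⁺ ≤ pPos f w⁺ := pPos_mono f hf (posPart_nonneg x) hxp
  have b2 : pPos f x⁻ ≤ pPos f w⁺ := pPos_mono f hf (negPart_nonneg x) hxn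
  have n1 : 0 ≤ pPos f x⁺ := pPos_nonneg f hf (posPart_nonneg x)
  have n2 : 0 ≤ pPos f x⁻ := pPos_nonneg f hf (negPart_nonneg x)
  rw [posLM_apply, abs_le]
  constructor <;> linarith

end AuxPos
section AuxHB

variable {X : Type*} [Lattice X] [AddCommGroup X]
  [CovariantClass X X (· + ·) (· ≤ ·)] [Module ℝ X] [PosSMulMono ℝ X]

theorem regular_imp_small (hreg : HatRegular X) {D : Set X} (hne : D.Nonempty)
    (hdir : DirectedOn (· ≥ ·) D) (hglb : IsGLB D 0) (h : ↥(obDual X))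
    (hpos : ∀ x : X, 0 ≤ x → 0 ≤ (h : X →ₗ[ℝ] ℝ) x) {ε : ℝ} (hε : 0 < ε) :
    ∃ d ∈ D, (h : X →ₗ[ℝ] ℝ) d < ε := by
  by_contra hcon
  push_neg at hcon
  have hD0 : ∀ e ∈ D, (0:X) ≤ e := fun e he => hglb.1 he
  obtain ⟨d₀, hd₀⟩ := hne
  set T : ↥(obDual X) → X → ℝ :=
    fun z d => sSup ((fun e => (z : X →ₗ[ℝ] ℝ) e) '' {e ∈ D | e ≤ d}) with hT
  have hTne : ∀ (z : ↥(obDual X)) {d : X}, d ∈ D →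
      ((fun e => (z : X →ₗ[ℝ] ℝ) e) '' {e ∈ D | e ≤ d}).Nonempty :=
    fun z d hd => ⟨_, d, ⟨hd, le_rfl⟩, rfl⟩
  have hTbdd : ∀ (z : ↥(obDual X)) {d : X}, d ∈ D →
      BddAbove ((fun e => (z : X →ₗ[ℝ] ℝ) e) '' {e ∈ D | e ≤ d}) := by
    intro z d hd
    obtain ⟨M, hM⟩ := z.2 d
    refine ⟨M, ?_⟩
    rintro r ⟨e, ⟨he, hed⟩, rfl⟩
    exact (abs_le.mp (hM e ((neg_nonpos.mpr (hD0 d hd)).trans (hD0 e he)) hed)).2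
  have hle_T : ∀ (z : ↥(obDual X)) {e d : X}, e ∈ D → d ∈ D → e ≤ d →
      (z : X →ₗ[ℝ] ℝ) e ≤ T z d :=
    fun z e d he hd hed => le_csSup (hTbdd z hd) ⟨e, ⟨he, hed⟩, rfl⟩
  have hT_le : ∀ (z : ↥(obDual X)) {d : X}, d ∈ D → ∀ {M : ℝ},
      (∀ e ∈ D, e ≤ d → (z : X →ₗ[ℝ] ℝ) e ≤ M) → T z d ≤ M := by
    intro z d hd M hM
    apply csSup_le (hTne z hd)
    rintro r ⟨e, ⟨he, hed⟩, rfl⟩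
    exact hM e he hed
  have hTmono : ∀ (z : ↥(obDual X)) {d d' : X}, d ∈ D → d' ∈ D → d ≤ d' → T z d ≤ T z d' := by
    intro z d d' hd hd' hdd'
    apply csSup_le_csSup (hTbdd z hd') (hTne z hd)
    rintro r ⟨e, ⟨he, hed⟩, rfl⟩
    exact ⟨e, ⟨he, hed.trans hdd'⟩, rfl⟩
  have hTlb : ∀ z : ↥(obDual X), ∃ B : ℝ, ∀ d ∈ D, B ≤ T z d := by
    intro z
    obtain ⟨M, hM⟩ := z.2 d₀
    refine ⟨-M, fun d hd => ?_⟩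
    obtain ⟨d'', hd'', h1, h2⟩ := hdir d hd d₀ hd₀
    have hz := (abs_le.mp (hM d'' ((neg_nonpos.mpr (hD0 _ hd₀)).trans (hD0 _ hd'')) h2)).1
    exact hz.trans (hle_T z hd'' hd h1)
  set q : ↥(obDual X) → ℝ := fun z => sInf (T z '' D) with hq
  have hqne : ∀ z : ↥(obDual X), (T z '' D).Nonempty := fun z => ⟨_, d₀, hd₀, rfl⟩
  have hqbdd : ∀ z : ↥(obDual X), BddBelow (T z '' D) := by
    intro z
    obtain ⟨B, hB⟩ := hTlb z
    refine ⟨B, ?_⟩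
    rintro r ⟨d, hd, rfl⟩
    exact hB d hd
  have hq_le : ∀ (z : ↥(obDual X)) {d : X}, d ∈ D → q z ≤ T z d :=
    fun z d hd => csInf_le (hqbdd z) ⟨d, hd, rfl⟩
  have hle_q : ∀ (z : ↥(obDual X)) {B : ℝ}, (∀ d ∈ D, B ≤ T z d) → B ≤ q z := by
    intro z B hB
    apply le_csInf (hqne z)
    rintro r ⟨d, hd, rfl⟩
    exact hB d hd
  have hq0 : q 0 = 0 := by
    have hT0 : ∀ d ∈ D, T (0 : ↥(obDual X)) d = 0 := by
      intro d hd
      apply le_antisymm (hT_le 0 hd (fun e he hed => by simp))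
      simpa using hle_T (0 : ↥(obDual X)) hd hd le_rfl
    exact le_antisymm (le_of_le_of_eq (hq_le 0 hd₀) (hT0 d₀ hd₀))
      (hle_q 0 (fun d hd => (hT0 d hd).ge))
  have hq_add : ∀ z1 z2 : ↥(obDual X), q (z1 + z2) ≤ q z1 + q z2 := by
    intro z1 z2
    have step : ∀ d1 ∈ D, ∀ d2 ∈ D, q (z1 + z2) ≤ T z1 d1 + T z2 d2 := by
      intro d1 h1 d2 h2
      obtain ⟨d, hd, hdd1, hdd2⟩ := hdir d1 h1 d2 h2
      refine (hq_le _ hd).trans ((hT_le _ hd fun e he hed => ?_).trans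
        (add_le_add (hTmono z1 hd h1 hdd1) (hTmono z2 hd h2 hdd2)))
      have e1 := hle_T z1 he hd hed
      have e2 := hle_T z2 he hd hed
      have e3 : ((z1 + z2 : ↥(obDual X)) : X →ₗ[ℝ] ℝ) e
          = (z1 : X →ₗ[ℝ] ℝ) e + (z2 : X →ₗ[ℝ] ℝ) e := by simp
      linarith
    have s2 : ∀ d1 ∈ D, q (z1 + z2) - T z1 d1 ≤ q z2 :=
      fun d1 h1 => hle_q z2 (fun d2 h2 => by linarith [step d1 h1 d2 h2])
    have s3 : q (z1 + z2) - q z2 ≤ q z1 :=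
      hle_q z1 (fun d1 h1 => by linarith [s2 d1 h1])
    linarith
  have hq_hom : ∀ c : ℝ, 0 < c → ∀ z : ↥(obDual X), q (c • z) = c * q z := by
    intro c hc z
    have hTc : ∀ d ∈ D, T (c • z) d = c * T z d := by
      intro d hd
      have himg : (fun e => ((c • z : ↥(obDual X)) : X →ₗ[ℝ] ℝ) e) '' {e ∈ D | e ≤ d}
          = (c * ·) '' ((fun e => (z : X →ₗ[ℝ] ℝ) e) '' {e ∈ D | e ≤ d}) := by
        rw [Set.image_image]
        apply Set.image_congr
        intro e _
        simp
      show sSup _ = _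
      rw [himg, csSup_mul_left' hc (hTne z hd) (hTbdd z hd)]
    have himg2 : T (c • z) '' D = (c * ·) '' (T z '' D) := by
      rw [Set.image_image]
      exact Set.image_congr (fun d hd => hTc d hd)
    show sInf _ = _
    rw [himg2, csInf_mul_left' hc (hqne z) (hqbdd z)]
  have hq_pos_le : ∀ z : ↥(obDual X), (∀ x : X, 0 ≤ x → 0 ≤ (z : X →ₗ[ℝ] ℝ) x) →
      ∀ d ∈ D, q z ≤ (z : X →ₗ[ℝ] ℝ) d := by
    intro z hz d hd
    refine (hq_le z hd).trans (hT_le z hd fun e he hed => ?_)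
    have h1 := hz (d - e) (sub_nonneg.mpr hed)
    have h2 := map_sub (z : X →ₗ[ℝ] ℝ) d e
    linarith
  have hch : ε ≤ q h := hle_q h (fun d hd => (hcon d hd).trans (hle_T h hd hd le_rfl))
  have hh0 : h ≠ 0 := by
    intro h0
    have hε' := hcon d₀ hd₀
    rw [h0] at hε'
    simp at hε'
    linarith
  have hqneg : -q h ≤ q (-h) := by
    have hs := hq_add h (-h)
    rw [show h + -h = (0 : ↥(obDual X)) from by abel, hq0] at hs
    linarith
  have hfle : ∀ x : (LinearPMap.mkSpanSingleton h (q h) hh0 : ↥(obDual X) →ₗ.[ℝ] ℝ).domain,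
      (LinearPMap.mkSpanSingleton h (q h) hh0) x ≤ q x := by
    rintro ⟨x, hx⟩
    obtain ⟨t, rfl⟩ := Submodule.mem_span_singleton.mp hx
    rw [LinearPMap.mkSpanSingleton'_apply]
    show t • q h ≤ q (t • h)
    rcases lt_trichotomy t 0 with htn | rfl | htp
    · have e1 : q (t • h) = (-t) * q (-h) := by
        rw [show t • h = (-t) • (-h) from (neg_smul_neg t h).symm,
          hq_hom (-t) (by linarith) (-h)]
      have e2 : (-t) * (-q h) ≤ (-t) * q (-h) := mul_le_mul_of_nonneg_left hqneg (by linarith)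
      rw [smul_eq_mul, e1]
      calc t * q h = (-t) * (-q h) := by ring
        _ ≤ (-t) * q (-h) := e2
    · rw [zero_smul, zero_smul, hq0]
    · rw [smul_eq_mul, hq_hom t htp h]
  obtain ⟨g, hg1, hg2⟩ := exists_extension_of_le_sublinear
      (LinearPMap.mkSpanSingleton h (q h) hh0) q hq_hom hq_add hfle
  have hgh : g h = q h := by
    have := hg1 ⟨h, Submodule.mem_span_singleton_self h⟩
    exact this.trans (LinearPMap.mkSpanSingleton'_apply_self _ _ _ _)
  have gmem : g ∈ obDual ↥(obDual X) := by
    intro w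
    refine ⟨T w d₀, fun z hz1 hz2 => ?_⟩
    have b1 : g z ≤ T w d₀ := by
      refine (hg2 z).trans ((hq_le z hd₀).trans (hT_le z hd₀ fun e he hed => ?_))
      exact (subPre_le_iff.mp hz2 e (hD0 e he)).trans (hle_T w he hd₀ hed)
    have b2 : g (-z) ≤ T w d₀ := by
      refine (hg2 (-z)).trans ((hq_le (-z) hd₀).trans (hT_le (-z) hd₀ fun e he hed => ?_))
      have h1 := subPre_le_iff.mp hz1 e (hD0 e he)
      have h2 := hle_T w he hd₀ hed
      simp only [NegMemClass.coe_neg, LinearMap.neg_apply] at h1 ⊢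
      linarith
    rw [show g (-z) = -g z from map_neg g z] at b2
    exact abs_le.mpr ⟨by linarith, b1⟩
  have hglb2 := hreg D ⟨d₀, hd₀⟩ hdir hglb
  have glow : (⟨g, gmem⟩ : ↥(obDual ↥(obDual X))) ∈ lowerBounds (hatEl X (obDual X) '' D) := by
    rintro b ⟨d, hd, rfl⟩
    apply subPre_le_iff.mpr
    intro z hz
    have hz' : ∀ x : X, 0 ≤ x → 0 ≤ (z : X →ₗ[ℝ] ℝ) x := fun x hx => by
      simpa using subPre_le_iff.mp hz x hx
    have hgz : g z ≤ (z : X →ₗ[ℝ] ℝ) d := (hg2 z).trans (hq_pos_le z hz' d hd)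
    exact hgz
  have hle0 := hglb2.2 glow
  have hh' : (0 : ↥(obDual X)) ≤ h := subPre_le_iff.mpr (fun x hx => by simpa using hpos x hx)
  have hfin := subPre_le_iff.mp hle0 h hh'
  simp only [ZeroMemClass.coe_zero, LinearMap.zero_apply] at hfin
  rw [hgh] at hfin
  linarith

end AuxHB
/-- The canonical image of `X` is a regular sublattice of `X~~` iff every order
bounded functional on `X` is order continuous. -/
theorem statement7 {X : Type u} [Lattice X] [AddCommGroup X]
    [CovariantClass X X (· + ·) (· ≤ ·)] [Module ℝ X] [PosSMulMono ℝ X]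
    (harch : IsArch X)
    (hsep : SepPoints X) :
    HatRegular X ↔ ∀ f : obDual X, OrdContE (f : X →ₗ[ℝ] ℝ) := by
  constructor
  · intro hreg f D hDne hDdir hDglb ε hε
    have hmem : (f : X →ₗ[ℝ] ℝ) ∈ obDual X := f.2
    have hmemneg : -(f : X →ₗ[ℝ] ℝ) ∈ obDual X := neg_mem hmem
    set P : X →ₗ[ℝ] ℝ := posLM (f : X →ₗ[ℝ] ℝ) hmem with hP
    set N : X →ₗ[ℝ] ℝ := posLM (-(f : X →ₗ[ℝ] ℝ)) hmemneg with hN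
    have hsum : P + N ∈ obDual X := add_mem (posLM_mem _ _) (posLM_mem _ _)
    have hpos : ∀ x : X, 0 ≤ x → 0 ≤ (P + N) x := fun x hx => by
      simp only [LinearMap.add_apply]
      exact add_nonneg (posLM_nonneg _ _ hx) (posLM_nonneg _ _ hx)
    obtain ⟨d, hd, hdlt⟩ := regular_imp_small hreg hDne hDdir hDglb ⟨P + N, hsum⟩
      (fun x hx => hpos x hx) hε
    refine ⟨d, hd, fun e he hed => ?_⟩
    have h0e : (0:X) ≤ e := hDglb.1 he
    have hmono : (P + N) e ≤ (P + N) d := by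
      have h1 := hpos (d - e) (sub_nonneg.mpr hed)
      have h2 := map_sub (P + N) d e
      linarith
    have habs : |(f : X →ₗ[ℝ] ℝ) e| ≤ (P + N) e := by
      have hple := le_posLM (f : X →ₗ[ℝ] ℝ) hmem h0e
      have hnle := le_posLM (-(f : X →ₗ[ℝ] ℝ)) hmemneg h0e
      have hpn : 0 ≤ P e := posLM_nonneg _ _ h0e
      have hnn : 0 ≤ N e := posLM_nonneg _ _ h0e
      rw [LinearMap.neg_apply] at hnle
      rw [abs_le]
      simp only [LinearMap.add_apply]
      constructor <;> [linarith; linarith]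
    have hdlt' : (P + N) d < ε := hdlt
    calc |(f : X →ₗ[ℝ] ℝ) e| ≤ (P + N) e := habs
      _ ≤ (P + N) d := hmono
      _ < ε := hdlt'
  · intro hcont D hne hdir hglb
    constructor
    · rintro b ⟨d, hd, rfl⟩
      apply subPre_le_iff.mpr
      intro z hz
      have h0d : (0:X) ≤ d := hglb.1 hd
      have hzd := subPre_le_iff.mp hz d h0d
      simpa [hatEl, hatFun] using hzd
    · intro g hg
      apply subPre_le_iff.mpr
      intro z hz
      have hz' : ∀ x : X, 0 ≤ x → 0 ≤ (z : X →ₗ[ℝ] ℝ) x := fun x hx => by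
        simpa using subPre_le_iff.mp hz x hx
      have hrhs : ((0 : ↥(obDual ↥(obDual X))) : ↥(obDual X) →ₗ[ℝ] ℝ) z = 0 := by simp
      rw [hrhs]
      by_contra hpos0
      push_neg at hpos0
      obtain ⟨d, hd, hsmall⟩ := hcont z D hne hdir hglb ((g : ↥(obDual X) →ₗ[ℝ] ℝ) z) hpos0
      have hgd : (g : ↥(obDual X) →ₗ[ℝ] ℝ) z ≤ (z : X →ₗ[ℝ] ℝ) d := by
        have := subPre_le_iff.mp (hg ⟨d, hd, rfl⟩) z hz
        simpa [hatEl, hatFun] using this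
      have habs := hsmall d hd le_rfl
      have := le_abs_self ((z : X →ₗ[ℝ] ℝ) d)
      linarith
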